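/- arXiv:1107.0473 — 2 statements merged into one kernel-verified Lean document; each statement's English description precedes it below -/
import Mathlib

section
/- Let p ∈ ℝ³ with ‖p‖ < 1. Let S > 0 and let γ(s) = (t(s), x(s)), s ∈ [0,S], be a future-directed causal C¹ curve in Minkowski spacetime with t(0) = 0 and x(0) = p, and suppose γ remains in the cone C = {(t,x) ∈ ℝ × ℝ³ : 0 ≤ t and ‖x‖ < 1 − t}. Then the Lorentzian length of γ satisfies ∫₀^S √(t'(s)² − ‖x'(s)‖²) ds ≤ √(1 − ‖p‖²). -/
/-- Reverse Cauchy–Schwarz: if `0 ≤ b < a` and `0 ≤ d ≤ c` then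
`√(a²-b²)·√(c²-d²) ≤ a·c - b·d`. -/
lemma key_rev_cs (a b c d : ℝ) (hb : 0 ≤ b) (hba : b < a) (hd : 0 ≤ d) (hdc : d ≤ c) :
    Real.sqrt (a ^ 2 - b ^ 2) * Real.sqrt (c ^ 2 - d ^ 2) ≤ a * c - b * d := by
  have h1 : Real.sqrt (a ^ 2 - b ^ 2) * Real.sqrt (c ^ 2 - d ^ 2)
      = Real.sqrt ((a ^ 2 - b ^ 2) * (c ^ 2 - d ^ 2)) := by
    rw [Real.sqrt_mul (by nlinarith)]
  have h2 : (a ^ 2 - b ^ 2) * (c ^ 2 - d ^ 2) ≤ (a * c - b * d) ^ 2 := by nlinarith [sq_nonneg (a * d - b * c)]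
  have h3 : (0:ℝ) ≤ a * c - b * d := by nlinarith
  calc Real.sqrt (a ^ 2 - b ^ 2) * Real.sqrt (c ^ 2 - d ^ 2)
      = Real.sqrt ((a ^ 2 - b ^ 2) * (c ^ 2 - d ^ 2)) := h1
    _ ≤ Real.sqrt ((a * c - b * d) ^ 2) := Real.sqrt_le_sqrt h2
    _ = a * c - b * d := by rw [Real.sqrt_sq h3]

/-- Let `p ∈ ℝ³` with `‖p‖ < 1`. Any future-directed causal `C¹` curve
`γ(s) = (t s, x s)`, `s ∈ [0,S]`, in Minkowski spacetime with `t 0 = 0`, `x 0 = p`, which remains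
in the cone `C = {(t,x) : 0 ≤ t ∧ ‖x‖ < 1 - t}`, has Lorentzian length
`∫₀^S √(t'(s)² - ‖x'(s)‖²) ds ≤ √(1 - ‖p‖²)`. -/
theorem lorentzian_length_le_of_stays_in_cone
    (p : EuclideanSpace ℝ (Fin 3)) (hp : ‖p‖ < 1)
    (S : ℝ) (hS : 0 < S)
    (t : ℝ → ℝ) (x : ℝ → EuclideanSpace ℝ (Fin 3))
    (t' : ℝ → ℝ) (x' : ℝ → EuclideanSpace ℝ (Fin 3))
    (ht : ∀ s ∈ Set.Icc 0 S, HasDerivAt t (t' s) s)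
    (hx : ∀ s ∈ Set.Icc 0 S, HasDerivAt x (x' s) s)
    (ht'cont : ContinuousOn t' (Set.Icc 0 S))
    (hx'cont : ContinuousOn x' (Set.Icc 0 S))
    (ht0 : t 0 = 0) (hx0 : x 0 = p)
    (hcausal : ∀ s ∈ Set.Icc 0 S, 0 < t' s ∧ ‖x' s‖ ≤ t' s)
    (hcone : ∀ s ∈ Set.Icc 0 S, 0 ≤ t s ∧ ‖x s‖ < 1 - t s) :
    ∫ s in (0:ℝ)..S, Real.sqrt ((t' s) ^ 2 - ‖x' s‖ ^ 2)
      ≤ Real.sqrt (1 - ‖p‖ ^ 2) := by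
  have huIcc : Set.uIcc (0:ℝ) S = Set.Icc 0 S := Set.uIcc_of_le hS.le
  -- the "radius" function
  set g : ℝ → ℝ := fun s => (1 - t s) ^ 2 - ‖x s‖ ^ 2 with hg_def
  set F : ℝ → ℝ := fun s => Real.sqrt (g s) with hF_def
  set F' : ℝ → ℝ := fun s =>
    (2 * (1 - t s) * (-(t' s)) - 2 * (inner ℝ (x s) (x' s) : ℝ)) * (1 / (2 * Real.sqrt (g s)))
    with hF'_def
  have hgpos : ∀ s ∈ Set.Icc (0:ℝ) S, 0 < g s := by
    intro s hs
    have h := hcone s hs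
    have hn : (0:ℝ) ≤ ‖x s‖ := norm_nonneg _
    simp only [hg_def]
    nlinarith [h.1, h.2]
  -- derivative of g
  have hg_deriv : ∀ s ∈ Set.Icc (0:ℝ) S,
      HasDerivAt g (2 * (1 - t s) * (-(t' s)) - 2 * (inner ℝ (x s) (x' s) : ℝ)) s := by
    intro s hs
    have h1 : HasDerivAt (fun u => (1 - t u) ^ 2) (2 * (1 - t s) * (-(t' s))) s := by
      have := ((hasDerivAt_const s (1:ℝ)).sub (ht s hs)).fun_pow 2
      simpa [mul_comm, mul_assoc, mul_left_comm, zero_sub] using this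
    have h2 : HasDerivAt (fun u => ‖x u‖ ^ 2) (2 * (inner ℝ (x s) (x' s) : ℝ)) s := by
      have h := HasDerivAt.inner ℝ (hx s hs) (hx s hs)
      have heq : (fun u => (inner ℝ (x u) (x u) : ℝ)) = fun u => ‖x u‖ ^ 2 := by
        funext u; exact real_inner_self_eq_norm_sq (x u)
      rw [heq] at h
      have hcomm : (inner ℝ (x' s) (x s) : ℝ) = inner ℝ (x s) (x' s) := real_inner_comm _ _
      rw [hcomm] at h
      rw [two_mul]
      exact h
    simpa [hg_def] using h1.fun_sub h2
  -- derivative of F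
  have hF_deriv : ∀ s ∈ Set.Icc (0:ℝ) S, HasDerivAt F (F' s) s := by
    intro s hs
    have hsq := Real.hasDerivAt_sqrt (ne_of_gt (hgpos s hs))
    have := HasDerivAt.comp s hsq (hg_deriv s hs)
    simpa [hF_def, hF'_def, mul_comm, Function.comp_def] using this
  -- continuity of t and x on Icc
  have htc : ContinuousOn t (Set.Icc 0 S) := fun s hs =>
    (ht s hs).continuousAt.continuousWithinAt
  have hxc : ContinuousOn x (Set.Icc 0 S) := fun s hs =>
    (hx s hs).continuousAt.continuousWithinAt
  have hgc : ContinuousOn g (Set.Icc 0 S) := by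
    apply ContinuousOn.sub
    · exact (continuousOn_const.sub htc).pow 2
    · exact (hxc.norm).pow 2
  have hFc' : ContinuousOn F' (Set.Icc 0 S) := by
    apply ContinuousOn.mul
    · apply ContinuousOn.sub
      · exact (continuousOn_const.mul (continuousOn_const.sub htc)).mul ht'cont.neg
      · exact continuousOn_const.mul (hxc.inner hx'cont)
    · apply ContinuousOn.div continuousOn_const
      · exact continuousOn_const.mul (hgc.sqrt)
      · intro s hs
        have := hgpos s hs
        positivity
  -- pointwise inequality: integrand ≤ -F'
  have hpt : ∀ s ∈ Set.Icc (0:ℝ) S,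
      Real.sqrt ((t' s) ^ 2 - ‖x' s‖ ^ 2) ≤ -F' s := by
    intro s hs
    have hco := hcone s hs
    have hca := hcausal s hs
    have hgp := hgpos s hs
    have hsg : 0 < Real.sqrt (g s) := Real.sqrt_pos.mpr hgp
    have hinner : -(‖x s‖ * ‖x' s‖) ≤ (inner ℝ (x s) (x' s) : ℝ) :=
      neg_le_of_abs_le (abs_real_inner_le_norm (x s) (x' s))
    have hkey := key_rev_cs (1 - t s) ‖x s‖ (t' s) ‖x' s‖
      (norm_nonneg _) hco.2 (norm_nonneg _) hca.2
    have hgeq : Real.sqrt (g s) = Real.sqrt ((1 - t s) ^ 2 - ‖x s‖ ^ 2) := by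
      simp [hg_def]
    have hmain : Real.sqrt ((t' s) ^ 2 - ‖x' s‖ ^ 2) * Real.sqrt (g s)
        ≤ (1 - t s) * t' s + (inner ℝ (x s) (x' s) : ℝ) := by
      rw [hgeq, mul_comm]
      calc Real.sqrt ((1 - t s) ^ 2 - ‖x s‖ ^ 2) * Real.sqrt ((t' s) ^ 2 - ‖x' s‖ ^ 2)
          ≤ (1 - t s) * t' s - ‖x s‖ * ‖x' s‖ := hkey
        _ ≤ (1 - t s) * t' s + (inner ℝ (x s) (x' s) : ℝ) := by linarith
    have : -F' s = ((1 - t s) * t' s + (inner ℝ (x s) (x' s) : ℝ)) / Real.sqrt (g s) := by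
      simp only [hF'_def]
      field_simp
      ring
    rw [this, le_div_iff₀ hsg]
    exact hmain
  -- integrability
  have hint1 : IntervalIntegrable (fun s => Real.sqrt ((t' s) ^ 2 - ‖x' s‖ ^ 2))
      MeasureTheory.volume 0 S := by
    apply ContinuousOn.intervalIntegrable
    rw [huIcc]
    exact ((ht'cont.pow 2).sub ((hx'cont.norm).pow 2)).sqrt
  have hintF' : IntervalIntegrable F' MeasureTheory.volume 0 S := by
    apply ContinuousOn.intervalIntegrable
    rw [huIcc]; exact hFc'
  have hint2 : IntervalIntegrable (fun s => -F' s) MeasureTheory.volume 0 S := hintF'.neg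
  -- FTC
  have hFTC : ∫ s in (0:ℝ)..S, -F' s = F 0 - F S := by
    have : ∫ s in (0:ℝ)..S, (fun u => -F' u) s = (fun u => -F u) S - (fun u => -F u) 0 := by
      apply intervalIntegral.integral_eq_sub_of_hasDerivAt
      · intro s hs
        rw [huIcc] at hs
        exact (hF_deriv s hs).neg
      · exact hint2
    rw [intervalIntegral.integral_neg]
    simp only [] at this
    rw [intervalIntegral.integral_neg] at this
    linarith
  have hmono : ∫ s in (0:ℝ)..S, Real.sqrt ((t' s) ^ 2 - ‖x' s‖ ^ 2)
      ≤ ∫ s in (0:ℝ)..S, -F' s :=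
    intervalIntegral.integral_mono_on hS.le hint1 hint2 hpt
  have hF0 : F 0 = Real.sqrt (1 - ‖p‖ ^ 2) := by
    simp [hF_def, hg_def, ht0, hx0]
  have hFS : 0 ≤ F S := Real.sqrt_nonneg _
  calc ∫ s in (0:ℝ)..S, Real.sqrt ((t' s) ^ 2 - ‖x' s‖ ^ 2)
      ≤ ∫ s in (0:ℝ)..S, -F' s := hmono
    _ = F 0 - F S := hFTC
    _ ≤ F 0 := by linarith
    _ = Real.sqrt (1 - ‖p‖ ^ 2) := hF0
end

section
/- Let T > 0, let g : [0,T) → Sym(3,ℝ) be a differentiable family of symmetric 3×3 real matrices with g'(t) = −2·M(t), where each M(t) is symmetric, and suppose there is an integrable function f : [0,T) → [0,∞) with ∫₀ᵀ f(t) dt ≤ Λ such that |vᵀ M(t) v| ≤ f(t)·(vᵀ g(t) v) for all t ∈ [0,T) and v ∈ ℝ³. If for some C ≥ 1 one has C⁻¹‖v‖² ≤ vᵀ g(0) v ≤ C‖v‖² for all v ∈ ℝ³, then for all t ∈ [0,T) and all v ∈ ℝ³: (C·e^{2Λ})⁻¹‖v‖² ≤ vᵀ g(t) v ≤ C·e^{2Λ}‖v‖².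 -/
open Set MeasureTheory intervalIntegral Real

set_option maxHeartbeats 1000000

/-- Key Grönwall-type lemma: if `φ' = -2 m` on `[0,T)`, `|m| ≤ f·φ`, `f ≥ 0` integrable,
and `φ > 0` on `[0,b]`, then `φ 0 · e^{-2I} ≤ φ b ≤ φ 0 · e^{2I}` with `I = ∫_{[0,T)} f`. -/
lemma ellipticity_keyA (T b : ℝ) (φ m f : ℝ → ℝ) (hb : b ∈ Set.Ico (0:ℝ) T)
    (hφd : ∀ s ∈ Set.Ico (0:ℝ) T, HasDerivWithinAt φ (-2 * m s) (Set.Ico (0:ℝ) T) s)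
    (hm : ∀ s ∈ Set.Ico (0:ℝ) T, |m s| ≤ f s * φ s)
    (hfint : MeasureTheory.IntegrableOn f (Set.Ico (0:ℝ) T))
    (hf0 : ∀ s ∈ Set.Ico (0:ℝ) T, 0 ≤ f s)
    (hpos : ∀ s ∈ Set.Icc (0:ℝ) b, 0 < φ s) :
    φ 0 * Real.exp (-(2 * ∫ s in Set.Ico (0:ℝ) T, f s)) ≤ φ b ∧
      φ b ≤ φ 0 * Real.exp (2 * ∫ s in Set.Ico (0:ℝ) T, f s) := by
  set I : ℝ := ∫ s in Set.Ico (0:ℝ) T, f s with hI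
  have hIccsub : Icc (0:ℝ) b ⊆ Ico (0:ℝ) T := fun x hx => ⟨hx.1, lt_of_le_of_lt hx.2 hb.2⟩
  have hIocsub : Ioc (0:ℝ) b ⊆ Ico (0:ℝ) T := fun x hx =>
    ⟨le_of_lt hx.1, lt_of_le_of_lt hx.2 hb.2⟩
  have hcφ : ContinuousOn φ (Icc 0 b) := fun s hs =>
    ((hφd s (hIccsub hs)).continuousWithinAt).mono hIccsub
  -- derivative as full derivative on `Ioc 0 b`
  have hdAt : ∀ s ∈ Ioc (0:ℝ) b, HasDerivAt φ (-2 * m s) s := by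
    intro s hs
    refine (hφd s (hIocsub hs)).hasDerivAt ?_
    exact mem_nhds_iff.mpr ⟨Ioo 0 T, Ioo_subset_Ico_self, isOpen_Ioo,
      ⟨hs.1, lt_of_le_of_lt hs.2 hb.2⟩⟩
  have hderivφ : ∀ s ∈ Ioc (0:ℝ) b, deriv φ s = -2 * m s := fun s hs => (hdAt s hs).deriv
  set F' : ℝ → ℝ := fun s => deriv φ s / φ s with hF'
  -- pointwise bound on the logarithmic derivative
  have hF'bd : ∀ s ∈ Ioc (0:ℝ) b, |F' s| ≤ 2 * f s := by
    intro s hs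
    have hφs : 0 < φ s := hpos s ⟨le_of_lt hs.1, hs.2⟩
    have h1 : |F' s| = |(-2 : ℝ) * m s| / φ s := by
      rw [hF']; simp only [abs_div, hderivφ s hs, abs_of_pos hφs]
    rw [h1, abs_mul, abs_neg]
    rw [div_le_iff₀ hφs]
    have := hm s (hIocsub hs)
    calc |(2:ℝ)| * |m s| = 2 * |m s| := by norm_num
      _ ≤ 2 * (f s * φ s) := by nlinarith [abs_nonneg (m s)]
      _ = 2 * f s * φ s := by ring
  -- integrability of the logarithmic derivative
  have h2fint : IntegrableOn (fun s => 2 * f s) (Ioc 0 b) := (hfint.mono_set hIocsub).const_mul 2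
  have hφmeas : AEStronglyMeasurable φ (volume.restrict (Ioc 0 b)) := by
    have : ContinuousOn φ (Ioc 0 b) := hcφ.mono Ioc_subset_Icc_self
    exact this.aestronglyMeasurable measurableSet_Ioc
  have hF'int : IntervalIntegrable F' volume 0 b := by
    rw [intervalIntegrable_iff_integrableOn_Ioc_of_le hb.1]
    refine Integrable.mono' h2fint (((measurable_deriv φ).aemeasurable.div hφmeas.aemeasurable).aestronglyMeasurable) ?_
    filter_upwards [self_mem_ae_restrict measurableSet_Ioc] with s hs
    simpa using hF'bd s hs
  -- FTC for `log ∘ φ`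
  have hcontL : ContinuousOn (fun s => Real.log (φ s)) (Icc 0 b) :=
    hcφ.log (fun x hx => (hpos x hx).ne')
  have hLd : ∀ x ∈ Ioo (0:ℝ) b, HasDerivWithinAt (fun s => Real.log (φ s)) (F' x) (Ioi x) x := by
    intro x hx
    have h1 : HasDerivAt (fun s => Real.log (φ s)) ((-2 * m x) / φ x) x :=
      (hdAt x ⟨hx.1, le_of_lt hx.2⟩).log (hpos x ⟨le_of_lt hx.1, le_of_lt hx.2⟩).ne'
    have : F' x = (-2 * m x) / φ x := by
      show deriv φ x / φ x = _
      rw [hderivφ x ⟨hx.1, le_of_lt hx.2⟩]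
    rw [this]
    exact h1.hasDerivWithinAt
  have hFTC : ∫ y in (0:ℝ)..b, F' y = Real.log (φ b) - Real.log (φ 0) :=
    integral_eq_sub_of_hasDeriv_right_of_le hb.1 hcontL hLd hF'int
  -- bound the integral
  have hIoc_int : IntegrableOn F' (Ioc 0 b) :=
    (intervalIntegrable_iff_integrableOn_Ioc_of_le hb.1).mp hF'int
  have habs : |∫ y in (0:ℝ)..b, F' y| ≤ ∫ y in (0:ℝ)..b, |F' y| :=
    intervalIntegral.abs_integral_le_integral_abs hb.1
  have hmono : ∫ y in (0:ℝ)..b, |F' y| ≤ ∫ y in Ioc (0:ℝ) b, 2 * f y := by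
    rw [intervalIntegral.integral_of_le hb.1]
    exact setIntegral_mono_on hIoc_int.abs h2fint measurableSet_Ioc hF'bd
  have hmono2 : ∫ y in Ioc (0:ℝ) b, 2 * f y ≤ ∫ y in Ico (0:ℝ) T, 2 * f y := by
    refine setIntegral_mono_set (hfint.const_mul 2) ?_ (HasSubset.Subset.eventuallyLE hIocsub)
    filter_upwards [self_mem_ae_restrict measurableSet_Ico] with s hs
    have := hf0 s hs; positivity
  have htwoI : ∫ y in Ico (0:ℝ) T, 2 * f y = 2 * I := by
    rw [hI, ← MeasureTheory.integral_const_mul]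
  have hfinal : |Real.log (φ b) - Real.log (φ 0)| ≤ 2 * I := by
    rw [← hFTC]
    calc |∫ y in (0:ℝ)..b, F' y| ≤ ∫ y in (0:ℝ)..b, |F' y| := habs
      _ ≤ ∫ y in Ioc (0:ℝ) b, 2 * f y := hmono
      _ ≤ ∫ y in Ico (0:ℝ) T, 2 * f y := hmono2
      _ = 2 * I := htwoI
  have hφb : 0 < φ b := hpos b ⟨hb.1, le_refl b⟩
  have hφ0 : 0 < φ 0 := hpos 0 ⟨le_refl 0, hb.1⟩
  have hub : Real.log (φ b) ≤ Real.log (φ 0) + 2 * I := by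
    have := abs_le.mp hfinal; linarith [this.2]
  have hlb : Real.log (φ 0) - 2 * I ≤ Real.log (φ b) := by
    have := abs_le.mp hfinal; linarith [this.1]
  constructor
  · have : Real.exp (Real.log (φ 0) - 2 * I) ≤ Real.exp (Real.log (φ b)) :=
      Real.exp_le_exp.mpr hlb
    rwa [Real.exp_log hφb, Real.exp_sub, Real.exp_log hφ0, div_eq_mul_inv, ← Real.exp_neg] at this
  · have : Real.exp (Real.log (φ b)) ≤ Real.exp (Real.log (φ 0) + 2 * I) :=
      Real.exp_le_exp.mpr hub
    rwa [Real.exp_log hφb, Real.exp_add, Real.exp_log hφ0] at this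

/-- Propagation of the uniform ellipticity assumption (G): if a differentiable
family `g : [0,T) → Sym(3,ℝ)` satisfies `g' = -2 M(t)` with `M(t)` symmetric, and
`|vᵀ M(t) v| ≤ f(t) · (vᵀ g(t) v)` for an integrable `f ≥ 0` with `∫₀ᵀ f ≤ Λ`, then the
two-sided bound `C⁻¹‖v‖² ≤ vᵀ g(0) v ≤ C‖v‖²` propagates with constant `C·e^{2Λ}`. -/
theorem ellipticity_propagation
    (T Λ C : ℝ) (hT : 0 < T) (hC : 1 ≤ C)
    (g M : ℝ → Matrix (Fin 3) (Fin 3) ℝ)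
    (f : ℝ → ℝ)
    (hgsymm : ∀ t ∈ Set.Ico (0:ℝ) T, (g t).IsSymm)
    (hMsymm : ∀ t ∈ Set.Ico (0:ℝ) T, (M t).IsSymm)
    (hderiv : ∀ t ∈ Set.Ico (0:ℝ) T, ∀ i j,
      HasDerivWithinAt (fun u => g u i j) (-2 * M t i j) (Set.Ico (0:ℝ) T) t)
    (hf0 : ∀ t ∈ Set.Ico (0:ℝ) T, 0 ≤ f t)
    (hfint : MeasureTheory.IntegrableOn f (Set.Ico (0:ℝ) T))
    (hfΛ : ∫ t in Set.Ico (0:ℝ) T, f t ≤ Λ)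
    (hbound : ∀ t ∈ Set.Ico (0:ℝ) T, ∀ v : Fin 3 → ℝ,
      |dotProduct v ((M t).mulVec v)| ≤ f t * dotProduct v ((g t).mulVec v))
    (hg0lower : ∀ v : Fin 3 → ℝ, C⁻¹ * (∑ i, v i ^ 2) ≤ dotProduct v ((g 0).mulVec v))
    (hg0upper : ∀ v : Fin 3 → ℝ, dotProduct v ((g 0).mulVec v) ≤ C * (∑ i, v i ^ 2)) :
    ∀ t ∈ Set.Ico (0:ℝ) T, ∀ v : Fin 3 → ℝ,
      (C * Real.exp (2 * Λ))⁻¹ * (∑ i, v i ^ 2) ≤ dotProduct v ((g t).mulVec v) ∧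
      dotProduct v ((g t).mulVec v) ≤ C * Real.exp (2 * Λ) * (∑ i, v i ^ 2) := by
  intro t ht v
  set I : ℝ := ∫ s in Set.Ico (0:ℝ) T, f s with hI
  have hI0 : 0 ≤ I := setIntegral_nonneg measurableSet_Ico hf0
  have hΛ0 : 0 ≤ Λ := le_trans hI0 hfΛ
  have hC0 : (0:ℝ) < C := lt_of_lt_of_le one_pos hC
  -- trivial case v = 0
  by_cases hv : v = 0
  · subst hv
    simp [dotProduct]
  -- set up scalar functions
  set φ : ℝ → ℝ := fun u => dotProduct v ((g u).mulVec v) with hφ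
  set m : ℝ → ℝ := fun u => dotProduct v ((M u).mulVec v) with hmdef
  have hexp : ∀ (A : Matrix (Fin 3) (Fin 3) ℝ),
      dotProduct v (A.mulVec v) = ∑ i, ∑ j, v i * (A i j * v j) := by
    intro A
    simp [dotProduct, Matrix.mulVec, Finset.mul_sum]
  have hφd : ∀ s ∈ Set.Ico (0:ℝ) T, HasDerivWithinAt φ (-2 * m s) (Set.Ico (0:ℝ) T) s := by
    intro s hs
    have h1 : HasDerivWithinAt (fun u => ∑ i, ∑ j, v i * (g u i j * v j))
        (∑ i : Fin 3, ∑ j : Fin 3, v i * ((-2 * M s i j) * v j)) (Set.Ico (0:ℝ) T) s := by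
      refine HasDerivWithinAt.fun_sum fun i _ => HasDerivWithinAt.fun_sum fun j _ => ?_
      exact ((hderiv s hs i j).mul_const (v j)).const_mul (v i)
    have heq : (∑ i : Fin 3, ∑ j : Fin 3, v i * ((-2 * M s i j) * v j)) = -2 * m s := by
      rw [hmdef]
      simp only [hexp, Finset.mul_sum]
      congr 1; funext i; congr 1; funext j; ring
    have heq2 : φ = fun u => ∑ i, ∑ j, v i * (g u i j * v j) := by
      funext u; exact hexp (g u)
    rw [heq2, ← heq]
    exact h1
  have hm : ∀ s ∈ Set.Ico (0:ℝ) T, |m s| ≤ f s * φ s := fun s hs => hbound s hs v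
  -- positivity of φ 0
  have hsum0 : 0 < ∑ i, v i ^ 2 := by
    have h1 : ∃ i, v i ≠ 0 := by
      by_contra h
      push_neg at h
      exact hv (funext h)
    obtain ⟨i, hi⟩ := h1
    have : 0 < v i ^ 2 := by positivity
    refine Finset.sum_pos' (fun j _ => by positivity) ⟨i, Finset.mem_univ i, this⟩
  have hφ0 : 0 < φ 0 := lt_of_lt_of_le (by positivity) (hg0lower v)
  -- positivity of φ on [0, t]
  set ε : ℝ := φ 0 * Real.exp (-(2 * I)) with hε
  have hε0 : 0 < ε := by positivity
  have hεφ0 : ε ≤ φ 0 := by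
    rw [hε]
    nth_rewrite 2 [show φ 0 = φ 0 * 1 by ring]
    refine mul_le_mul_of_nonneg_left ?_ (le_of_lt hφ0)
    rw [show (1:ℝ) = Real.exp 0 by simp]
    exact Real.exp_le_exp.mpr (by linarith)
  have hIccsub : Set.Icc (0:ℝ) t ⊆ Set.Ico (0:ℝ) T := fun x hx =>
    ⟨hx.1, lt_of_le_of_lt hx.2 ht.2⟩
  have hcφ : ContinuousOn φ (Set.Icc 0 t) := fun s hs =>
    ((hφd s (hIccsub hs)).continuousWithinAt).mono hIccsub
  have hpos : ∀ s ∈ Set.Icc (0:ℝ) t, 0 < φ s := by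
    by_contra hcon
    push_neg at hcon
    obtain ⟨s₁, hs₁, hφs₁⟩ := hcon
    -- the set where φ ≤ ε/2
    set Z : Set ℝ := Set.Icc 0 t ∩ φ ⁻¹' Set.Iic (ε / 2) with hZ
    have hZne : Z.Nonempty := ⟨s₁, hs₁, by simp; linarith⟩
    have hZcl : IsClosed Z := hcφ.preimage_isClosed_of_isClosed isClosed_Icc isClosed_Iic
    have hZbdd : BddBelow Z := ⟨0, fun x hx => hx.1.1⟩
    set t₀ : ℝ := sInf Z with ht₀
    have ht₀Z : t₀ ∈ Z := hZcl.csInf_mem hZne hZbdd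
    have ht₀pos : 0 < t₀ := by
      rcases lt_or_eq_of_le ht₀Z.1.1 with h | h
      · exact h
      · exfalso
        have : φ t₀ ≤ ε / 2 := ht₀Z.2
        rw [← h] at this
        linarith
    -- for s < t₀ in [0,t], φ s > ε/2, hence by the key lemma φ s ≥ ε
    have hbelow : ∀ s ∈ Set.Ico (0:ℝ) t₀, ε ≤ φ s := by
      intro s hs
      have hsmem : s ∈ Set.Icc (0:ℝ) t := ⟨hs.1, le_trans (le_of_lt hs.2) ht₀Z.1.2⟩
      have hposs : ∀ u ∈ Set.Icc (0:ℝ) s, 0 < φ u := by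
        intro u hu
        have humem : u ∈ Set.Icc (0:ℝ) t := ⟨hu.1, le_trans hu.2 hsmem.2⟩
        by_contra hcc
        push_neg at hcc
        have huZ : u ∈ Z := ⟨humem, by simp; linarith⟩
        have : t₀ ≤ u := csInf_le hZbdd huZ
        have : t₀ ≤ s := le_trans this hu.2
        exact absurd hs.2 (not_lt.mpr this)
      have := (ellipticity_keyA T s φ m f ⟨hs.1, lt_of_le_of_lt hsmem.2 ht.2⟩
        hφd hm hfint hf0 hposs).1
      rw [hε]; exact this
    -- continuity at t₀ from the left gives φ t₀ ≥ ε, contradiction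
    have hlim : ContinuousWithinAt φ (Set.Ico 0 t₀) t₀ := by
      have h1 : ContinuousWithinAt φ (Set.Ico (0:ℝ) T) t₀ :=
        (hφd t₀ (hIccsub ht₀Z.1)).continuousWithinAt
      exact h1.mono (fun x hx => ⟨hx.1, lt_of_lt_of_le hx.2 (hIccsub ht₀Z.1).2.le⟩)
    have hne : (nhdsWithin t₀ (Set.Ico (0:ℝ) t₀)).NeBot := by
      refine mem_closure_iff_nhdsWithin_neBot.mp ?_
      have : t₀ ∈ closure (Set.Ioo (0:ℝ) t₀) := by
        rw [closure_Ioo (ne_of_lt ht₀pos)]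
        exact ⟨le_of_lt ht₀pos, le_refl _⟩
      exact closure_mono Set.Ioo_subset_Ico_self this
    have hεt₀ : ε ≤ φ t₀ := by
      refine ge_of_tendsto hlim ?_
      filter_upwards [self_mem_nhdsWithin] with x hx
      exact hbelow x hx
    have : φ t₀ ≤ ε / 2 := ht₀Z.2
    linarith
  -- apply the key lemma at b = t
  have hkey := ellipticity_keyA T t φ m f ht hφd hm hfint hf0 hpos
  have hexpI_le : Real.exp (2 * I) ≤ Real.exp (2 * Λ) := Real.exp_le_exp.mpr (by linarith)
  have hexpΛ_le : Real.exp (-(2 * Λ)) ≤ Real.exp (-(2 * I)) := Real.exp_le_exp.mpr (by linarith)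
  constructor
  · -- lower bound
    have h1 : (C * Real.exp (2 * Λ))⁻¹ * (∑ i, v i ^ 2)
        = (C⁻¹ * (∑ i, v i ^ 2)) * Real.exp (-(2 * Λ)) := by
      rw [mul_inv, Real.exp_neg]; ring
    rw [h1]
    calc (C⁻¹ * (∑ i, v i ^ 2)) * Real.exp (-(2 * Λ))
        ≤ φ 0 * Real.exp (-(2 * I)) := by
          refine mul_le_mul (hg0lower v) hexpΛ_le (Real.exp_pos _).le (le_of_lt hφ0)
      _ ≤ φ t := hkey.1
  · -- upper bound
    calc φ t ≤ φ 0 * Real.exp (2 * I) := hkey.2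
      _ ≤ (C * (∑ i, v i ^ 2)) * Real.exp (2 * Λ) := by
          refine mul_le_mul (hg0upper v) hexpI_le (Real.exp_pos _).le (by positivity)
      _ = C * Real.exp (2 * Λ) * (∑ i, v i ^ 2) := by ring
end
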